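/- Let an infinite run (N = ∞) of the continued fraction algorithm on input z ∈ ℂ be given, and let p, q ∈ 𝒪 with q ≠ 0 and z ≠ p/q. Then there exists a smallest index n ≥ 0 such that |q_{n+1}| ≥ √(|q|·μ/(|q·z − p|·(1 − ε²))), and for this n there exist a, b ∈ 𝒪 with |b| < 2·√(|q·(q·z − p)|·μ/(1 − ε²)) such that b_n·p = a·p_n + b·p_{n−1} and b_n·q = a·q_n + b·q_{n−1}. In particular, if |q·(q·z − p)| ≤ (1 − ε²)/(4·μ), then p·q_n = q·p_n. -/

import Mathlib

noncomputable section

namespace CFNE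

/-- τ = (Δ + i·√|Δ|)/2. -/
def tau (Δ : ℤ) : ℂ := ((Δ : ℂ) + Complex.I * (Real.sqrt |(Δ : ℝ)|)) / 2

/-- The imaginary quadratic order 𝒪 = ℤ[τ] of discriminant Δ, as a subring of ℂ. -/
def O (Δ : ℤ) : Subring ℂ := Subring.closure {tau Δ}

/-- A (nonzero or zero) ideal of 𝒪, presented as a subset of ℂ. -/
structure IdealS (Δ : ℤ) where
  carrier : Set ℂ
  subset : carrier ⊆ (O Δ : Set ℂ)
  zero_mem : (0 : ℂ) ∈ carrier
  add_mem : ∀ x ∈ carrier, ∀ y ∈ carrier, x + y ∈ carrier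
  neg_mem : ∀ x ∈ carrier, -x ∈ carrier
  smul_mem : ∀ r ∈ (O Δ : Set ℂ), ∀ x ∈ carrier, r * x ∈ carrier

/-- The ideal as an additive subgroup of ℂ. -/
def IdealS.toAddSubgroup {Δ : ℤ} (I : IdealS Δ) : AddSubgroup ℂ where
  carrier := I.carrier
  zero_mem' := I.zero_mem
  add_mem' := fun hx hy => I.add_mem _ hx _ hy
  neg_mem' := fun hx => I.neg_mem _ hx

/-- The norm of an ideal: the index [𝒪 : 𝔟]. -/
def IdealS.norm {Δ : ℤ} (I : IdealS Δ) : ℕ :=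
  I.toAddSubgroup.relIndex (O Δ).toAddSubgroup

/-- The ideal is nonzero. -/
def IdealS.Nonzero {Δ : ℤ} (I : IdealS Δ) : Prop := ∃ x ∈ I.carrier, x ≠ 0

/-- Two nonzero ideals lie in the same class if x·𝔞 = y·𝔟 for some nonzero x, y ∈ 𝒪. -/
def SameClass {Δ : ℤ} (I J : IdealS Δ) : Prop :=
  ∃ x ∈ (O Δ : Set ℂ), ∃ y ∈ (O Δ : Set ℂ), x ≠ 0 ∧ y ≠ 0 ∧
    (fun t => x * t) '' I.carrier = (fun t => y * t) '' J.carrier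

/-- A reduced ideal: a nonzero ideal of minimal norm in its ideal class. -/
def IsReduced {Δ : ℤ} (I : IdealS Δ) : Prop :=
  I.Nonzero ∧ ∀ J : IdealS Δ, J.Nonzero → SameClass I J → I.norm ≤ J.norm

/-- The inverse fractional ideal 𝔟⁻¹ = {x ∈ ℂ : x·𝔟 ⊆ 𝒪}. -/
def invSet {Δ : ℤ} (I : IdealS Δ) : Set ℂ :=
  {x : ℂ | ∀ y ∈ I.carrier, x * y ∈ (O Δ : Set ℂ)}

/-- The fractional ideal a·𝔟 + b·𝔟⁻¹, as a subset of ℂ. -/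
def combSet {Δ : ℤ} (I : IdealS Δ) (a b : ℂ) : Set ℂ :=
  {u : ℂ | ∃ s ∈ I.carrier, ∃ t ∈ invSet I, u = a * s + b * t}

/-- The ideal x·𝒪 + y·𝒪 of 𝒪 generated by x and y, as a subset of ℂ. -/
def genSet (Δ : ℤ) (x y : ℂ) : Set ℂ :=
  {u : ℂ | ∃ s ∈ (O Δ : Set ℂ), ∃ t ∈ (O Δ : Set ℂ), u = x * s + y * t}

/-- The set is the carrier of a reduced ideal of 𝒪. -/
def IsReducedSet (Δ : ℤ) (S : Set ℂ) : Prop :=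
  ∃ J : IdealS Δ, IsReduced J ∧ J.carrier = S

/-- B is admissible with ε ∈ (0,1): B is a nonempty finite subset of 𝒪 ∖ {0}, and for every
reduced ideal 𝔟 with 𝔟 ∩ B ≠ ∅, the discs D(a/b, ε/|b|) over b ∈ 𝔟 ∩ B, a ∈ 𝔟⁻¹ with
a·𝔟 + b·𝔟⁻¹ reduced, cover ℂ. -/
def Admissible (Δ : ℤ) (B : Set ℂ) (ε : ℝ) : Prop :=
  B.Nonempty ∧ B.Finite ∧ B ⊆ (O Δ : Set ℂ) ∧ (0 : ℂ) ∉ B ∧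
  ∀ I : IdealS Δ, IsReduced I → (I.carrier ∩ B).Nonempty →
    ∀ z : ℂ, ∃ b ∈ I.carrier ∩ B, ∃ a ∈ invSet I,
      IsReducedSet Δ (combSet I a b) ∧ ‖z - a / b‖ ≤ ε / ‖b‖

/-- μ = max{|b| : b ∈ B}. -/
def mu (B : Set ℂ) : ℝ := sSup ((fun b : ℂ => ‖b‖) '' B)

/-- A run of the continued fraction algorithm of length N ∈ ℕ ∪ {∞} on input z. -/
structure Run (Δ : ℤ) (B : Set ℂ) (ε : ℝ) (z : ℂ) (N : ℕ∞) where
  a : ℤ → ℂ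
  b : ℤ → ℂ
  p : ℤ → ℂ
  q : ℤ → ℂ
  zs : ℤ → ℂ
  b_zero : b 0 = 1
  p_neg_one : p (-1) = 0
  q_neg_one : q (-1) = 1
  p_zero : p 0 = 1
  q_zero : q 0 = 0
  zs_zero : zs 0 = z
  ha : ∀ n : ℕ, 1 ≤ n → (n : ℕ∞) ≤ N → a n ∈ O Δ
  hb : ∀ n : ℕ, 1 ≤ n → (n : ℕ∞) ≤ N → b n ∈ B
  hne : ∀ n : ℕ, 1 ≤ n → (n : ℕ∞) ≤ N → b n * zs ((n : ℤ) - 1) - a n ≠ 0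
  hclose : ∀ n : ℕ, 1 ≤ n → (n : ℕ∞) ≤ N →
    ‖b n * zs ((n : ℤ) - 1) - a n‖ ≤ ε * ‖b ((n : ℤ) - 1)‖
  hp : ∀ n : ℕ, 1 ≤ n → (n : ℕ∞) ≤ N →
    p n = (a n * p ((n : ℤ) - 1) + b n * p ((n : ℤ) - 2)) / b ((n : ℤ) - 1)
  hq : ∀ n : ℕ, 1 ≤ n → (n : ℕ∞) ≤ N →
    q n = (a n * q ((n : ℤ) - 1) + b n * q ((n : ℤ) - 2)) / b ((n : ℤ) - 1)
  hz : ∀ n : ℕ, 1 ≤ n → (n : ℕ∞) ≤ N →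
    zs n = b ((n : ℤ) - 1) / (b n * zs ((n : ℤ) - 1) - a n)
  hpO : ∀ n : ℕ, 1 ≤ n → (n : ℕ∞) ≤ N → p n ∈ O Δ
  hqO : ∀ n : ℕ, 1 ≤ n → (n : ℕ∞) ≤ N → q n ∈ O Δ
  hred : ∀ n : ℕ, 1 ≤ n → (n : ℕ∞) ≤ N → IsReducedSet Δ (genSet Δ (p n) (q n))

lemma sq_s {Δ : ℤ} (hΔneg : Δ < 0) :
    ((Real.sqrt |(Δ : ℝ)| : ℝ) : ℂ) ^ 2 = (-Δ : ℂ) := by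
  have h : (Real.sqrt |(Δ : ℝ)|) ^ 2 = -(Δ:ℝ) := by
    rw [Real.sq_sqrt (abs_nonneg _)]
    rw [abs_of_neg (by exact_mod_cast hΔneg)]
  exact_mod_cast congrArg Complex.ofReal h

lemma hm4 {Δ : ℤ} (hΔmod : Δ % 4 = 0 ∨ Δ % 4 = 1) :
    (Δ * (Δ - 1) / 4) * 4 = Δ * (Δ - 1) := by
  apply Int.ediv_mul_cancel
  rcases hΔmod with h | h
  · exact Dvd.dvd.mul_right (Int.dvd_of_emod_eq_zero h) _
  · exact Dvd.dvd.mul_left (Int.dvd_of_emod_eq_zero (by omega)) _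

lemma tau_sq {Δ : ℤ} (hΔneg : Δ < 0) (hΔmod : Δ % 4 = 0 ∨ Δ % 4 = 1) :
    (tau Δ) ^ 2 = (Δ : ℂ) * tau Δ - ((Δ * (Δ - 1) / 4 : ℤ) : ℂ) := by
  have hs := sq_s hΔneg
  have hm : ((Δ * (Δ - 1) / 4 : ℤ) : ℂ) * 4 = (Δ:ℂ) * ((Δ:ℂ) - 1) := by
    exact_mod_cast congrArg (fun x : ℤ => (x : ℂ)) (hm4 hΔmod)
  unfold tau
  linear_combination (((Real.sqrt |(Δ : ℝ)| : ℝ) : ℂ)^2/4) * Complex.I_sq - hs/4 + hm/4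

lemma conj_tau {Δ : ℤ} : (starRingEnd ℂ) (tau Δ) = (Δ : ℂ) - tau Δ := by
  unfold tau
  simp [map_div₀, Complex.conj_I, map_ofNat]
  ring

lemma mem_O {Δ : ℤ} (hΔneg : Δ < 0) (hΔmod : Δ % 4 = 0 ∨ Δ % 4 = 1) {w : ℂ}
    (hw : w ∈ O Δ) : ∃ x y : ℤ, w = (x : ℂ) + (y : ℂ) * tau Δ := by
  let S : Subring ℂ :=
    { carrier := {w | ∃ x y : ℤ, w = (x : ℂ) + (y : ℂ) * tau Δ}
      one_mem' := ⟨1, 0, by push_cast; ring⟩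
      zero_mem' := ⟨0, 0, by push_cast; ring⟩
      add_mem' := by
        rintro a b ⟨x1, y1, rfl⟩ ⟨x2, y2, rfl⟩
        exact ⟨x1 + x2, y1 + y2, by push_cast; ring⟩
      neg_mem' := by
        rintro a ⟨x1, y1, rfl⟩
        exact ⟨-x1, -y1, by push_cast; ring⟩
      mul_mem' := by
        rintro a b ⟨x1, y1, rfl⟩ ⟨x2, y2, rfl⟩
        refine ⟨x1 * x2 - (Δ * (Δ - 1) / 4) * y1 * y2, x1 * y2 + y1 * x2 + Δ * y1 * y2, ?_⟩
        have ht := tau_sq hΔneg hΔmod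
        push_cast
        linear_combination (y1 : ℂ) * (y2 : ℂ) * ht }
  have : O Δ ≤ S := by
    rw [O, Subring.closure_le]
    rintro t rfl
    exact ⟨0, 1, by push_cast; ring⟩
  exact this hw

lemma one_le_abs_O {Δ : ℤ} (hΔneg : Δ < 0) (hΔmod : Δ % 4 = 0 ∨ Δ % 4 = 1) {w : ℂ}
    (hw : w ∈ O Δ) (hw0 : w ≠ 0) : 1 ≤ ‖w‖ := by
  obtain ⟨x, y, rfl⟩ := mem_O hΔneg hΔmod hw
  set m : ℤ := Δ * (Δ - 1) / 4 with hmdef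
  have key : ((x:ℂ) + y * tau Δ) * (starRingEnd ℂ) ((x:ℂ) + y * tau Δ)
      = ((x^2 + Δ * x * y + m * y^2 : ℤ) : ℂ) := by
    rw [map_add, map_mul]
    rw [conj_tau]
    have h1 : (starRingEnd ℂ) (x:ℂ) = (x:ℂ) := by simp
    have h2 : (starRingEnd ℂ) (y:ℂ) = (y:ℂ) := by simp
    rw [h1, h2]
    have ht := tau_sq hΔneg hΔmod
    push_cast
    linear_combination (-(y:ℂ)^2) * ht
  rw [Complex.mul_conj] at key
  have hN : Complex.normSq ((x:ℂ) + y * tau Δ) = ((x^2 + Δ * x * y + m * y^2 : ℤ) : ℝ) := by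
    exact_mod_cast key
  have hpos : 0 < Complex.normSq ((x:ℂ) + y * tau Δ) := Complex.normSq_pos.2 hw0
  have hN1 : (1:ℤ) ≤ x^2 + Δ * x * y + m * y^2 := by
    by_contra h
    push_neg at h
    have h0 : (x^2 + Δ * x * y + m * y^2 : ℤ) ≤ 0 := by omega
    have h0' : ((x^2 + Δ * x * y + m * y^2 : ℤ) : ℝ) ≤ 0 := by exact_mod_cast h0
    linarith [hN ▸ hpos]
  have h1 : (1:ℝ) ≤ Complex.normSq ((x:ℂ) + y * tau Δ) := by
    rw [hN]; exact_mod_cast hN1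
  rw [← Complex.sq_norm] at h1
  nlinarith [norm_nonneg ((x:ℂ) + y * tau Δ)]

section RunLemmas

variable {Δ : ℤ} {B : Set ℂ} {ε : ℝ} {z : ℂ}

lemma b_mem_B (R : Run Δ B ε z ⊤) (n : ℕ) : R.b ((n+1 : ℕ) : ℤ) ∈ B :=
  R.hb (n+1) (by omega) le_top

lemma b_ne (hadm : Admissible Δ B ε) (R : Run Δ B ε z ⊤) (n : ℕ) :
    R.b ((n : ℕ) : ℤ) ≠ 0 := by
  cases n with
  | zero => simp [R.b_zero]
  | succ k =>
    intro h
    exact hadm.2.2.2.1 (h ▸ b_mem_B R k)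

lemma abs_b_le_mu (hadm : Admissible Δ B ε) (hΔneg : Δ < 0)
    (hΔmod : Δ % 4 = 0 ∨ Δ % 4 = 1) (R : Run Δ B ε z ⊤) (n : ℕ) :
    ‖R.b ((n : ℕ) : ℤ)‖ ≤ mu B ∧ 1 ≤ ‖R.b ((n : ℕ) : ℤ)‖ ∧ 1 ≤ mu B := by
  obtain ⟨⟨b0, hb0⟩, hfin, hsub, h0, _⟩ := hadm
  have hbdd : BddAbove ((fun b : ℂ => ‖b‖) '' B) := (hfin.image _).bddAbove
  have hle : ∀ b ∈ B, ‖b‖ ≤ mu B := fun b hb =>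
    le_csSup hbdd (Set.mem_image_of_mem _ hb)
  have hone : ∀ b ∈ B, 1 ≤ ‖b‖ := fun b hb =>
    one_le_abs_O hΔneg hΔmod (hsub hb) (fun h => h0 (h ▸ hb))
  have hmu : 1 ≤ mu B := le_trans (hone b0 hb0) (hle b0 hb0)
  cases n with
  | zero => simpa [R.b_zero] using hmu
  | succ k =>
    exact ⟨hle _ (b_mem_B R k), hone _ (b_mem_B R k), hmu⟩

lemma cast_sub_one (n : ℕ) : ((n+1 : ℕ) : ℤ) - 1 = (n : ℤ) := by push_cast; ring

lemma cast_sub_two (n : ℕ) : ((n+1 : ℕ) : ℤ) - 2 = (n : ℤ) - 1 := by push_cast; ring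

/-- The determinant identity. -/
lemma det_id (hadm : Admissible Δ B ε) (R : Run Δ B ε z ⊤) (n : ℕ) :
    R.p (n : ℤ) * R.q ((n : ℤ) - 1) - R.p ((n : ℤ) - 1) * R.q (n : ℤ)
      = (-1) ^ n * R.b (n : ℤ) := by
  induction n with
  | zero =>
    norm_num [R.p_zero, R.q_zero, R.p_neg_one, R.q_neg_one, R.b_zero]
  | succ n IH =>
    have hbn : R.b ((n : ℕ) : ℤ) ≠ 0 := b_ne hadm R n
    have hp1 := R.hp (n+1) (by omega) le_top
    have hq1 := R.hq (n+1) (by omega) le_top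
    rw [cast_sub_one, cast_sub_two] at hp1 hq1
    rw [eq_div_iff hbn] at hp1 hq1
    rw [cast_sub_one]
    have key : (R.p ((n+1:ℕ) : ℤ) * R.q (n : ℤ) - R.p (n:ℤ) * R.q ((n+1:ℕ) : ℤ)) * R.b (n:ℤ)
        = ((-1)^(n+1) * R.b ((n+1:ℕ):ℤ)) * R.b (n:ℤ) := by
      linear_combination (R.q (n:ℤ)) * hp1 - (R.p (n:ℤ)) * hq1 - (R.b ((n+1:ℕ):ℤ)) * IH
    exact mul_right_cancel₀ hbn key

/-- The fundamental identity z·(qₙ·zₙ + qₙ₋₁) = pₙ·zₙ + pₙ₋₁. -/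
lemma ident (hadm : Admissible Δ B ε) (R : Run Δ B ε z ⊤) (n : ℕ) :
    z * (R.q (n : ℤ) * R.zs (n : ℤ) + R.q ((n : ℤ) - 1))
      = R.p (n : ℤ) * R.zs (n : ℤ) + R.p ((n : ℤ) - 1) := by
  induction n with
  | zero =>
    norm_num [R.p_zero, R.q_zero, R.p_neg_one, R.q_neg_one, R.zs_zero]
  | succ n IH =>
    have hbn : R.b ((n : ℕ) : ℤ) ≠ 0 := b_ne hadm R n
    have hd : R.b ((n+1:ℕ):ℤ) * R.zs ((n:ℕ):ℤ) - R.a ((n+1:ℕ):ℤ) ≠ 0 := by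
      have := R.hne (n+1) (by omega) le_top
      rwa [cast_sub_one] at this
    have hp1 := R.hp (n+1) (by omega) le_top
    have hq1 := R.hq (n+1) (by omega) le_top
    have hz1 := R.hz (n+1) (by omega) le_top
    rw [cast_sub_one, cast_sub_two] at hp1 hq1
    rw [cast_sub_one] at hz1
    rw [eq_div_iff hbn] at hp1 hq1
    rw [eq_div_iff hd] at hz1
    rw [cast_sub_one]
    have key : (z * (R.q ((n+1:ℕ):ℤ) * R.zs ((n+1:ℕ):ℤ) + R.q (n:ℤ)))
          * (R.b ((n+1:ℕ):ℤ) * R.zs ((n:ℕ):ℤ) - R.a ((n+1:ℕ):ℤ))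
        = (R.p ((n+1:ℕ):ℤ) * R.zs ((n+1:ℕ):ℤ) + R.p (n:ℤ))
          * (R.b ((n+1:ℕ):ℤ) * R.zs ((n:ℕ):ℤ) - R.a ((n+1:ℕ):ℤ)) := by
      linear_combination (z * R.q ((n+1:ℕ):ℤ) - R.p ((n+1:ℕ):ℤ)) * hz1
        + z * hq1 - hp1 + R.b ((n+1:ℕ):ℤ) * IH
    exact mul_right_cancel₀ hd key

/-- |zsₙ| ≥ 1/ε for n ≥ 1, and zsₙ ≠ 0. -/
lemma zs_big (hadm : Admissible Δ B ε) (hΔneg : Δ < 0) (hΔmod : Δ % 4 = 0 ∨ Δ % 4 = 1)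
    (hε0 : 0 < ε) (R : Run Δ B ε z ⊤) (n : ℕ) :
    1 ≤ ε * ‖R.zs ((n+1:ℕ) : ℤ)‖ ∧ R.zs ((n+1:ℕ) : ℤ) ≠ 0 := by
  have hd : R.b ((n+1:ℕ):ℤ) * R.zs ((n:ℕ):ℤ) - R.a ((n+1:ℕ):ℤ) ≠ 0 := by
    have := R.hne (n+1) (by omega) le_top
    rwa [cast_sub_one] at this
  have hz1 := R.hz (n+1) (by omega) le_top
  have hcl := R.hclose (n+1) (by omega) le_top
  rw [cast_sub_one] at hz1 hcl
  rw [eq_div_iff hd] at hz1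
  have hbn : R.b ((n : ℕ) : ℤ) ≠ 0 := b_ne hadm R n
  have h1 : 1 ≤ ‖R.b ((n:ℕ):ℤ)‖ := (abs_b_le_mu hadm hΔneg hΔmod R n).2.1
  have habs : ‖R.zs ((n+1:ℕ):ℤ)‖
      * ‖R.b ((n+1:ℕ):ℤ) * R.zs ((n:ℕ):ℤ) - R.a ((n+1:ℕ):ℤ)‖
      = ‖R.b ((n:ℕ):ℤ)‖ := by
    rw [← norm_mul, hz1]
  have hdpos : 0 < ‖R.b ((n+1:ℕ):ℤ) * R.zs ((n:ℕ):ℤ) - R.a ((n+1:ℕ):ℤ)‖ :=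
    norm_pos_iff.mpr hd
  constructor
  · nlinarith [norm_nonneg (R.zs ((n+1:ℕ):ℤ)), hcl, habs]
  · intro h0
    rw [h0, zero_mul] at hz1
    exact hbn hz1.symm

/-- zₙ₊₁·eₙ₊₁ = −eₙ. -/
lemma e_rec (hadm : Admissible Δ B ε) (R : Run Δ B ε z ⊤) (n : ℕ) :
    R.zs ((n+1:ℕ) : ℤ) * (R.q ((n+1:ℕ) : ℤ) * z - R.p ((n+1:ℕ) : ℤ))
      = -(R.q ((n:ℕ) : ℤ) * z - R.p ((n:ℕ) : ℤ)) := by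
  have h := ident hadm R (n+1)
  rw [cast_sub_one] at h
  linear_combination h

/-- |eₙ₊₁| ≤ ε·|eₙ|. -/
lemma e_decay (hadm : Admissible Δ B ε) (hΔneg : Δ < 0) (hΔmod : Δ % 4 = 0 ∨ Δ % 4 = 1)
    (hε0 : 0 < ε) (R : Run Δ B ε z ⊤) (n : ℕ) :
    ‖R.q ((n+1:ℕ) : ℤ) * z - R.p ((n+1:ℕ) : ℤ)‖
      ≤ ε * ‖R.q ((n:ℕ) : ℤ) * z - R.p ((n:ℕ) : ℤ)‖ := by
  have h := e_rec hadm R n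
  have hzb := (zs_big hadm hΔneg hΔmod hε0 R n).1
  have habs : ‖R.zs ((n+1:ℕ):ℤ)‖
      * ‖R.q ((n+1:ℕ) : ℤ) * z - R.p ((n+1:ℕ) : ℤ)‖
      = ‖R.q ((n:ℕ) : ℤ) * z - R.p ((n:ℕ) : ℤ)‖ := by
    rw [← norm_mul, h, norm_neg]
  nlinarith [norm_nonneg (R.q ((n+1:ℕ) : ℤ) * z - R.p ((n+1:ℕ) : ℤ)),
    norm_nonneg (R.zs ((n+1:ℕ):ℤ))]

/-- |eₙ| ≤ ε^n. -/
lemma e_pow (hadm : Admissible Δ B ε) (hΔneg : Δ < 0) (hΔmod : Δ % 4 = 0 ∨ Δ % 4 = 1)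
    (hε0 : 0 < ε) (R : Run Δ B ε z ⊤) (n : ℕ) :
    ‖R.q ((n:ℕ) : ℤ) * z - R.p ((n:ℕ) : ℤ)‖ ≤ ε ^ n := by
  induction n with
  | zero => norm_num [R.p_zero, R.q_zero]
  | succ n IH =>
    have h := e_decay hadm hΔneg hΔmod hε0 R n
    calc ‖R.q ((n+1:ℕ) : ℤ) * z - R.p ((n+1:ℕ) : ℤ)‖
        ≤ ε * ‖R.q ((n:ℕ) : ℤ) * z - R.p ((n:ℕ) : ℤ)‖ := h
      _ ≤ ε * ε ^ n := by nlinarith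
      _ = ε ^ (n+1) := by ring

/-- Cross identity: qₙ₊₁·eₙ − qₙ·eₙ₊₁ = (−1)ⁿ⁺¹·bₙ₊₁. -/
lemma cross (hadm : Admissible Δ B ε) (R : Run Δ B ε z ⊤) (n : ℕ) :
    R.q ((n+1:ℕ) : ℤ) * (R.q ((n:ℕ) : ℤ) * z - R.p ((n:ℕ) : ℤ))
      - R.q ((n:ℕ) : ℤ) * (R.q ((n+1:ℕ) : ℤ) * z - R.p ((n+1:ℕ) : ℤ))
      = (-1) ^ (n+1) * R.b ((n+1:ℕ) : ℤ) := by
  have h := det_id hadm R (n+1)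
  rw [cast_sub_one] at h
  linear_combination h


lemma q_one (R : Run Δ B ε z ⊤) :
    R.q ((1:ℕ) : ℤ) = R.b ((1:ℕ) : ℤ) := by
  have hq1 := R.hq 1 (by omega) le_top
  have h1 : ((1:ℕ):ℤ) - 1 = (0:ℤ) := by norm_num
  have h2 : ((1:ℕ):ℤ) - 2 = (-1:ℤ) := by norm_num
  rw [h1, h2, R.q_zero, R.q_neg_one, R.b_zero] at hq1
  simpa using hq1

/-- |qₙ₊₁·eₙ| ≤ μ/(1−ε²). -/
lemma ubound (hadm : Admissible Δ B ε) (hΔneg : Δ < 0) (hΔmod : Δ % 4 = 0 ∨ Δ % 4 = 1)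
    (hε0 : 0 < ε) (hε1 : ε < 1) (R : Run Δ B ε z ⊤) (n : ℕ) :
    ‖R.q ((n+1:ℕ) : ℤ)‖ * ‖R.q ((n:ℕ) : ℤ) * z - R.p ((n:ℕ) : ℤ)‖
      ≤ mu B / (1 - ε ^ 2) := by
  have hδ : 0 < 1 - ε ^ 2 := by nlinarith
  have hmu : 1 ≤ mu B := (abs_b_le_mu hadm hΔneg hΔmod R 0).2.2
  induction n with
  | zero =>
    rw [q_one R]
    have h1 : ‖R.q ((0:ℕ) : ℤ) * z - R.p ((0:ℕ) : ℤ)‖ = 1 := by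
      norm_num [R.p_zero, R.q_zero]
    rw [h1, mul_one, le_div_iff₀ hδ]
    have hb1 := (abs_b_le_mu hadm hΔneg hΔmod R 1).1
    nlinarith [norm_nonneg (R.b ((1:ℕ):ℤ)), sq_nonneg ε]
  | succ n IH =>
    have hc := cross hadm R (n+1)
    have heq : R.q ((n+2:ℕ) : ℤ) * (R.q ((n+1:ℕ) : ℤ) * z - R.p ((n+1:ℕ) : ℤ))
        = (-1)^(n+2) * R.b ((n+2:ℕ) : ℤ)
          + R.q ((n+1:ℕ) : ℤ) * (R.q ((n+2:ℕ) : ℤ) * z - R.p ((n+2:ℕ) : ℤ)) := by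
      linear_combination hc
    have tri : ‖R.q ((n+2:ℕ) : ℤ)‖
          * ‖R.q ((n+1:ℕ) : ℤ) * z - R.p ((n+1:ℕ) : ℤ)‖
        ≤ ‖R.b ((n+2:ℕ) : ℤ)‖
          + ‖R.q ((n+1:ℕ) : ℤ)‖
            * ‖R.q ((n+2:ℕ) : ℤ) * z - R.p ((n+2:ℕ) : ℤ)‖ := by
      calc ‖R.q ((n+2:ℕ) : ℤ)‖
            * ‖R.q ((n+1:ℕ) : ℤ) * z - R.p ((n+1:ℕ) : ℤ)‖
          = ‖R.q ((n+2:ℕ) : ℤ) * (R.q ((n+1:ℕ) : ℤ) * z - R.p ((n+1:ℕ) : ℤ))‖ :=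
            (norm_mul _ _).symm
        _ = ‖(-1:ℂ)^(n+2) * R.b ((n+2:ℕ) : ℤ)
              + R.q ((n+1:ℕ) : ℤ) * (R.q ((n+2:ℕ) : ℤ) * z - R.p ((n+2:ℕ) : ℤ))‖ := by
            rw [heq]
        _ ≤ ‖(-1:ℂ)^(n+2) * R.b ((n+2:ℕ) : ℤ)‖
              + ‖R.q ((n+1:ℕ) : ℤ) * (R.q ((n+2:ℕ) : ℤ) * z - R.p ((n+2:ℕ) : ℤ))‖ :=
            norm_add_le _ _
        _ = ‖R.b ((n+2:ℕ) : ℤ)‖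
              + ‖R.q ((n+1:ℕ) : ℤ)‖
                * ‖R.q ((n+2:ℕ) : ℤ) * z - R.p ((n+2:ℕ) : ℤ)‖ := by
            simp [map_mul, map_pow]
    have e1 := e_decay hadm hΔneg hΔmod hε0 R (n+1)
    have e0 := e_decay hadm hΔneg hΔmod hε0 R n
    have hb2 := (abs_b_le_mu hadm hΔneg hΔmod R (n+2)).1
    set A := ‖R.q ((n+1:ℕ) : ℤ)‖ with hA
    have hA0 : 0 ≤ A := norm_nonneg _
    have h1 : A * ‖R.q ((n+2:ℕ) : ℤ) * z - R.p ((n+2:ℕ) : ℤ)‖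
        ≤ ε^2 * (A * ‖R.q ((n:ℕ) : ℤ) * z - R.p ((n:ℕ) : ℤ)‖) := by
      have t1 := mul_le_mul_of_nonneg_left e1 hA0
      have t2 := mul_le_mul_of_nonneg_left e0 (by positivity : (0:ℝ) ≤ ε * A)
      nlinarith [t1, t2]
    have h2 : ε^2 * (A * ‖R.q ((n:ℕ) : ℤ) * z - R.p ((n:ℕ) : ℤ)‖)
        ≤ ε^2 * (mu B / (1 - ε^2)) :=
      mul_le_mul_of_nonneg_left IH (sq_nonneg ε)
    have h3 : mu B + ε^2 * (mu B / (1 - ε^2)) = mu B / (1 - ε^2) := by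
      field_simp
      ring
    linarith [tri, h1, h2, hb2]

/-- Growth: 1 ≤ (|qₙ₊₁| + ε·|qₙ|)·εⁿ. -/
lemma growth (hadm : Admissible Δ B ε) (hΔneg : Δ < 0) (hΔmod : Δ % 4 = 0 ∨ Δ % 4 = 1)
    (hε0 : 0 < ε) (R : Run Δ B ε z ⊤) (n : ℕ) :
    1 ≤ (‖R.q ((n+1:ℕ) : ℤ)‖ + ε * ‖R.q ((n:ℕ) : ℤ)‖) * ε ^ n := by
  have hc := cross hadm R n
  have hb1 : 1 ≤ ‖R.b ((n+1:ℕ) : ℤ)‖ := (abs_b_le_mu hadm hΔneg hΔmod R (n+1)).2.1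
  have tri : ‖R.b ((n+1:ℕ) : ℤ)‖
      ≤ ‖R.q ((n+1:ℕ) : ℤ)‖ * ‖R.q ((n:ℕ) : ℤ) * z - R.p ((n:ℕ) : ℤ)‖
        + ‖R.q ((n:ℕ) : ℤ)‖ * ‖R.q ((n+1:ℕ) : ℤ) * z - R.p ((n+1:ℕ) : ℤ)‖ := by
    calc ‖R.b ((n+1:ℕ) : ℤ)‖
        = ‖(-1:ℂ)^(n+1) * R.b ((n+1:ℕ) : ℤ)‖ := by simp [map_mul, map_pow]
      _ = ‖R.q ((n+1:ℕ) : ℤ) * (R.q ((n:ℕ) : ℤ) * z - R.p ((n:ℕ) : ℤ))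
            - R.q ((n:ℕ) : ℤ) * (R.q ((n+1:ℕ) : ℤ) * z - R.p ((n+1:ℕ) : ℤ))‖ := by rw [hc]
      _ ≤ _ := by
          rw [← norm_mul, ← norm_mul]
          simpa [sub_eq_add_neg] using norm_add_le
            (R.q ((n+1:ℕ) : ℤ) * (R.q ((n:ℕ) : ℤ) * z - R.p ((n:ℕ) : ℤ)))
            (-(R.q ((n:ℕ) : ℤ) * (R.q ((n+1:ℕ) : ℤ) * z - R.p ((n+1:ℕ) : ℤ))))
  have e0 := e_decay hadm hΔneg hΔmod hε0 R n
  have ep := e_pow hadm hΔneg hΔmod hε0 R n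
  have hq0 : 0 ≤ ‖R.q ((n:ℕ) : ℤ)‖ := norm_nonneg _
  have hq1 : 0 ≤ ‖R.q ((n+1:ℕ) : ℤ)‖ := norm_nonneg _
  have he0 : 0 ≤ ‖R.q ((n:ℕ) : ℤ) * z - R.p ((n:ℕ) : ℤ)‖ := norm_nonneg _
  have key : 1 ≤ (‖R.q ((n+1:ℕ) : ℤ)‖ + ε * ‖R.q ((n:ℕ) : ℤ)‖)
      * ‖R.q ((n:ℕ) : ℤ) * z - R.p ((n:ℕ) : ℤ)‖ := by
    nlinarith [mul_le_mul_of_nonneg_left e0 hq0]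
  have hfac : 0 ≤ ‖R.q ((n+1:ℕ) : ℤ)‖ + ε * ‖R.q ((n:ℕ) : ℤ)‖ := by
    positivity
  nlinarith [mul_le_mul_of_nonneg_left ep hfac]

end RunLemmas

lemma cast_succ' (n : ℕ) : ((n+1 : ℕ) : ℤ) = (n : ℤ) + 1 := by push_cast; ring

set_option maxHeartbeats 1000000 in
theorem stmt8 (Δ : ℤ) (hΔneg : Δ < 0) (hΔmod : Δ % 4 = 0 ∨ Δ % 4 = 1)
    (B : Set ℂ) (ε : ℝ) (hε0 : 0 < ε) (hε1 : ε < 1) (hadm : Admissible Δ B ε)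
    (z : ℂ) (R : Run Δ B ε z ⊤)
    (p q : ℂ) (hp : p ∈ O Δ) (hq : q ∈ O Δ) (hq0 : q ≠ 0) (hzpq : z ≠ p / q) :
    ∃ n : ℕ,
      Real.sqrt (‖q‖ * mu B / (‖q * z - p‖ * (1 - ε ^ 2))) ≤
        ‖R.q ((n : ℤ) + 1)‖ ∧
      (∀ m : ℕ,
        Real.sqrt (‖q‖ * mu B / (‖q * z - p‖ * (1 - ε ^ 2))) ≤
          ‖R.q ((m : ℤ) + 1)‖ → n ≤ m) ∧
      ∃ a ∈ O Δ, ∃ b ∈ O Δ,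
        ‖b‖ < 2 * Real.sqrt (‖q * (q * z - p)‖ * mu B / (1 - ε ^ 2)) ∧
        R.b n * p = a * R.p n + b * R.p ((n : ℤ) - 1) ∧
        R.b n * q = a * R.q n + b * R.q ((n : ℤ) - 1) ∧
        (‖q * (q * z - p)‖ ≤ (1 - ε ^ 2) / (4 * mu B) →
          p * R.q n = q * R.p n) := by
  classical
  have hδ : 0 < 1 - ε ^ 2 := by nlinarith
  have hmu1 : 1 ≤ mu B := (abs_b_le_mu hadm hΔneg hΔmod R 0).2.2
  have hmu0 : 0 < mu B := by linarith
  have hqa : 1 ≤ ‖q‖ := one_le_abs_O hΔneg hΔmod hq hq0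
  have hqa0 : 0 < ‖q‖ := by linarith
  have hE0 : q * z - p ≠ 0 := by
    intro h
    apply hzpq
    rw [eq_div_iff hq0]
    linear_combination h
  have hE : 0 < ‖q * z - p‖ := norm_pos_iff.mpr hE0
  set T := Real.sqrt (‖q‖ * mu B / (‖q * z - p‖ * (1 - ε ^ 2))) with hTdef
  have hTval : T ^ 2 = ‖q‖ * mu B / (‖q * z - p‖ * (1 - ε ^ 2)) :=
    Real.sq_sqrt (by positivity)
  have hT0 : 0 < T := Real.sqrt_pos.2 (by positivity)
  have hex : ∃ m : ℕ, T ≤ ‖R.q ((m : ℤ) + 1)‖ := by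
    by_contra hno
    push_neg at hno
    obtain ⟨nn, hnn⟩ := exists_pow_lt_of_lt_one
      (show (0:ℝ) < 1 / (T * (1 + ε)) from by positivity) hε1
    have hg := growth hadm hΔneg hΔmod hε0 R nn
    rw [cast_succ'] at hg
    have hq1 : ‖R.q ((nn : ℤ) + 1)‖ < T := hno nn
    have hqn : ‖R.q ((nn : ℕ) : ℤ)‖ < T := by
      cases nn with
      | zero => simpa [R.q_zero] using hT0
      | succ k =>
        have := hno k
        rwa [cast_succ']
    have hlt : ‖R.q ((nn : ℤ) + 1)‖ + ε * ‖R.q ((nn : ℕ) : ℤ)‖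
        < T * (1 + ε) := by nlinarith
    have h1 := mul_lt_mul_of_pos_right hlt (pow_pos hε0 nn)
    have h2 := mul_lt_mul_of_pos_left hnn (show (0:ℝ) < T * (1 + ε) from by positivity)
    have h3 : T * (1 + ε) * (1 / (T * (1 + ε))) = 1 := by field_simp
    nlinarith
  refine ⟨Nat.find hex, Nat.find_spec hex, fun m hm => Nat.find_min' hex hm, ?_⟩
  set n := Nat.find hex with hndef
  have hn1 : T ≤ ‖R.q ((n : ℤ) + 1)‖ := Nat.find_spec hex
  -- O-membership of the p's and q's
  have pqO : ∀ k : ℕ, R.p ((k : ℕ) : ℤ) ∈ O Δ ∧ R.q ((k : ℕ) : ℤ) ∈ O Δ := by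
    intro k
    cases k with
    | zero =>
      constructor
      · simp only [Nat.cast_zero, R.p_zero]; exact one_mem _
      · simp only [Nat.cast_zero, R.q_zero]; exact zero_mem _
    | succ k => exact ⟨R.hpO (k+1) (by omega) le_top, R.hqO (k+1) (by omega) le_top⟩
  have pqOm : R.p ((n : ℤ) - 1) ∈ O Δ ∧ R.q ((n : ℤ) - 1) ∈ O Δ := by
    cases n with
    | zero =>
      constructor
      · simp only [Nat.cast_zero, zero_sub, R.p_neg_one]; exact zero_mem _
      · simp only [Nat.cast_zero, zero_sub, R.q_neg_one]; exact one_mem _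
    | succ k =>
      rw [cast_sub_one]
      exact pqO k
  set w : ℂ := (-1 : ℂ) ^ n with hwdef
  have hwO : w ∈ O Δ := pow_mem (neg_mem (one_mem _)) n
  have hw1 : w * w = 1 := by
    rw [hwdef, ← pow_add, show n + n = 2 * n from by ring, pow_mul]
    norm_num
  have hwabs : ‖w‖ = 1 := by
    rw [hwdef]
    simp [map_pow]
  have hwne : w ≠ 0 := by
    intro h
    rw [h] at hwabs
    simp at hwabs
  set a0 : ℂ := w * (p * R.q ((n : ℤ) - 1) - q * R.p ((n : ℤ) - 1)) with ha0def
  set b0 : ℂ := w * (q * R.p ((n : ℕ) : ℤ) - p * R.q ((n : ℕ) : ℤ)) with hb0def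
  have ha0O : a0 ∈ O Δ := mul_mem hwO (sub_mem (mul_mem hp pqOm.2) (mul_mem hq pqOm.1))
  have hb0O : b0 ∈ O Δ := mul_mem hwO (sub_mem (mul_mem hq (pqO n).1) (mul_mem hp (pqO n).2))
  have hdet := det_id hadm R n
  have eqp : R.b ((n : ℕ) : ℤ) * p = a0 * R.p ((n : ℕ) : ℤ) + b0 * R.p ((n : ℤ) - 1) := by
    rw [ha0def, hb0def]
    linear_combination (-w * p) * hdet + (-(p * R.b ((n : ℕ) : ℤ))) * hw1
  have eqq : R.b ((n : ℕ) : ℤ) * q = a0 * R.q ((n : ℕ) : ℤ) + b0 * R.q ((n : ℤ) - 1) := by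
    rw [ha0def, hb0def]
    linear_combination (-w * q) * hdet + (-(q * R.b ((n : ℕ) : ℤ))) * hw1
  -- the bound on |b0|
  set Aq := ‖q‖ with hAq
  set En := ‖R.q ((n : ℕ) : ℤ) * z - R.p ((n : ℕ) : ℤ)‖ with hEn
  set Qn := ‖R.q ((n : ℕ) : ℤ)‖ with hQn
  set Ez := ‖q * z - p‖ with hEz
  have hEn0 : 0 ≤ En := norm_nonneg _
  have hQn0 : 0 ≤ Qn := norm_nonneg _
  have habsb : ‖b0‖ ≤ Aq * En + Qn * Ez := by
    rw [hb0def, norm_mul, hwabs, one_mul]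
    calc ‖q * R.p ((n : ℕ) : ℤ) - p * R.q ((n : ℕ) : ℤ)‖
        = ‖-(q * (R.q ((n : ℕ) : ℤ) * z - R.p ((n : ℕ) : ℤ)))
            + R.q ((n : ℕ) : ℤ) * (q * z - p)‖ := by
          congr 1
          ring
      _ ≤ ‖-(q * (R.q ((n : ℕ) : ℤ) * z - R.p ((n : ℕ) : ℤ)))‖
            + ‖R.q ((n : ℕ) : ℤ) * (q * z - p)‖ := norm_add_le _ _
      _ = Aq * En + Qn * Ez := by
          rw [norm_neg, norm_mul, norm_mul]
  have hub := ubound hadm hΔneg hΔmod hε0 hε1 R n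
  rw [cast_succ'] at hub
  have hT2 : T ^ 2 * (Ez * (1 - ε ^ 2)) = Aq * mu B := by
    rw [hTval]
    field_simp
  have s1 : T * En ≤ mu B / (1 - ε ^ 2) := by
    nlinarith [hn1, hub, hEn0]
  have s2 : Aq * En ≤ T * Ez := by
    have h := mul_le_mul_of_nonneg_left s1 (show (0:ℝ) ≤ Aq from by linarith)
    have h2 : Aq * (mu B / (1 - ε ^ 2)) = T * (T * Ez) := by
      field_simp
      linear_combination -hT2
    have h3 : T * (Aq * En) ≤ T * (T * Ez) := by nlinarith [h, h2]
    exact le_of_mul_le_mul_left h3 hT0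
  have hQnT : Qn < T := by
    rw [hQn]
    cases hc : n with
    | zero => simpa [R.q_zero] using hT0
    | succ k =>
      have hk : ¬ (T ≤ ‖R.q ((k : ℤ) + 1)‖) := Nat.find_min hex (by omega)
      push_neg at hk
      rwa [cast_succ']
  have hRHS : Real.sqrt (‖q * (q * z - p)‖ * mu B / (1 - ε ^ 2)) = T * Ez := by
    have hmul : ‖q * (q * z - p)‖ = Aq * Ez := norm_mul _ _
    have hsq : (T * Ez) ^ 2 = ‖q * (q * z - p)‖ * mu B / (1 - ε ^ 2) := by
      rw [hmul, mul_pow, hTval]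
      field_simp
    rw [← hsq, Real.sqrt_sq (by positivity)]
  have hblt : ‖b0‖ < 2 * Real.sqrt (‖q * (q * z - p)‖ * mu B / (1 - ε ^ 2)) := by
    rw [hRHS]
    have : Qn * Ez < T * Ez := mul_lt_mul_of_pos_right hQnT hE
    linarith
  refine ⟨a0, ha0O, b0, hb0O, hblt, eqp, eqq, ?_⟩
  intro hsmall
  have hmul : ‖q * (q * z - p)‖ = Aq * Ez := norm_mul _ _
  have hsqle : ‖q * (q * z - p)‖ * mu B / (1 - ε ^ 2) ≤ 1 / 4 := by
    rw [hmul] at hsmall ⊢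
    have hsmall' : Aq * Ez * (4 * mu B) ≤ 1 - ε ^ 2 :=
      (le_div_iff₀ (by positivity : (0:ℝ) < 4 * mu B)).1 hsmall
    rw [div_le_div_iff₀ hδ (by norm_num : (0:ℝ) < 4)]
    nlinarith [hsmall']
  have hsqrt : Real.sqrt (‖q * (q * z - p)‖ * mu B / (1 - ε ^ 2)) ≤ 1 / 2 := by
    have := Real.sqrt_le_sqrt hsqle
    rwa [show (1:ℝ)/4 = (1/2)^2 from by norm_num, Real.sqrt_sq (by norm_num : (0:ℝ) ≤ 1/2)] at this
  have hb0small : ‖b0‖ < 1 := by linarith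
  have hb00 : b0 = 0 := by
    by_contra hne
    linarith [one_le_abs_O hΔneg hΔmod hb0O hne]
  rw [hb0def] at hb00
  rcases mul_eq_zero.1 hb00 with h | h
  · exact absurd h hwne
  · linear_combination -h
end CFNE
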